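/- Under the standing assumptions, let c and c' be codewords of C_{n−1}(n,q) with supp(c') ⊆ supp(c) and wt(c) ≤ W(n,q). Suppose S is a set of exactly ⌈wt(c)/θ_{n−1}⌉ pairwise distinct hyperplanes and (α_H)_{H∈S} are nonzero scalars in ℤ/pℤ with c = Σ_{H∈S} α_H·f_H, and suppose S' is a set of exactly ⌈wt(c')/θ_{n−1}⌉ pairwise distinct hyperplanes and (β_H)_{H∈S'} are nonzero scalars in ℤ/pℤ with c' = Σ_{H∈S'} β_H·f_H. Then S' ⊆ S. -/

import Mathlib

open Module

noncomputable section

/-- `pgTheta q m = 1 + q + … + q^m` for `m ≥ 0`, and `0` for `m < 0`. -/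
def pgTheta (q : ℕ) (m : ℤ) : ℤ := ∑ i ∈ Finset.range (m + 1).toNat, (q : ℤ) ^ i

/-- `q^j`, truncated to `0` for negative exponents `j`. -/
def pgQpow (q : ℕ) (j : ℤ) : ℤ := if j < 0 then 0 else (q : ℤ) ^ j.toNat

/-- `Δ_{i,q}` where `q = p^h`: `⌊√q / 2^(i-2)⌋` if `h > 2`, and `⌊p / 2^i⌋` if `h = 2`. -/
noncomputable def pgDelta (p h : ℕ) (i : ℤ) : ℤ :=
  if 2 < h then ⌊Real.sqrt ((p : ℝ) ^ h) / (2 : ℝ) ^ (i - 2)⌋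
  else ⌊(p : ℝ) / (2 : ℝ) ^ i⌋

/-- `W(i,q) = (Δ_{i,q} - 1)·θ_{i-1}`. -/
noncomputable def pgW (p h : ℕ) (i : ℤ) : ℤ := (pgDelta p h i - 1) * pgTheta (p ^ h) (i - 1)

/-- `U(n,i,q) = q^i − (Δ_{n,q} − 2)·⌊q^(i−1)⌋ − (i−2)·((q−1)·Δ_{n,q} + 1)·⌊q^(i−3)⌋ + θ_{i−3}`. -/
noncomputable def pgU (p h n : ℕ) (i : ℤ) : ℤ :=
  pgQpow (p ^ h) i - (pgDelta p h n - 2) * pgQpow (p ^ h) (i - 1)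
    - (i - 2) * ((((p ^ h : ℕ) : ℤ) - 1) * pgDelta p h n + 1) * pgQpow (p ^ h) (i - 3)
    + pgTheta (p ^ h) (i - 3)

/-- `⌈w / θ_m⌉` as a natural number. -/
noncomputable def pgCeil (q w : ℕ) (m : ℤ) : ℕ := (⌈(w : ℚ) / ((pgTheta q m : ℤ) : ℚ)⌉).toNat
open scoped Classical

/-- A point of `PG(n,q)`: a 1-dimensional subspace of `F^(n+1)`. -/
abbrev PGPoint (F : Type) [Field F] (n : ℕ) :=
  {P : Submodule F (Fin (n + 1) → F) // finrank F P = 1}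

/-- The indicator function of a subspace `κ`, with values in `ZMod p`. -/
noncomputable def pgInd (p : ℕ) (F : Type) [Field F] (n : ℕ)
    (κ : Submodule F (Fin (n + 1) → F)) : PGPoint F n → ZMod p :=
  fun P => if P.1 ≤ κ then 1 else 0

/-- The code `C_{n-1}(n,q)`: the `ZMod p`-span of the indicator functions of all
hyperplanes (i.e. `n`-dimensional subspaces of `F^(n+1)`). -/
noncomputable def pgCode (p : ℕ) (F : Type) [Field F] (n : ℕ) :
    Submodule (ZMod p) (PGPoint F n → ZMod p) :=
  Submodule.span (ZMod p)
    {f | ∃ H : Submodule F (Fin (n + 1) → F), finrank F H = n ∧ f = pgInd p F n H}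

/-- The weight of a codeword: the number of points where it is nonzero. -/
noncomputable def pgWt (p : ℕ) (F : Type) [Field F] (n : ℕ)
    (c : PGPoint F n → ZMod p) : ℕ :=
  Set.ncard {P : PGPoint F n | c P ≠ 0}

/-- The number of points of `supp c` lying in the subspace `κ`. -/
noncomputable def pgSecant (p : ℕ) (F : Type) [Field F] (n : ℕ)
    (c : PGPoint F n → ZMod p) (κ : Submodule F (Fin (n + 1) → F)) : ℕ :=
  Set.ncard {P : PGPoint F n | c P ≠ 0 ∧ P.1 ≤ κ}

/-- A codeword `c` is minimal if every codeword whose support is contained in the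
support of `c` is a scalar multiple of `c`. -/
noncomputable def pgMinimal (p : ℕ) (F : Type) [Field F] (n : ℕ)
    (c : PGPoint F n → ZMod p) : Prop :=
  ∀ c' ∈ pgCode p F n, {P : PGPoint F n | c' P ≠ 0} ⊆ {P : PGPoint F n | c P ≠ 0} →
    ∃ α : ZMod p, c' = α • c


section PGAux

lemma pg_finite (F : Type) [Field F] [Fintype F] (n : ℕ) : Finite (PGPoint F n) := by
  haveI : Finite (Submodule F (Fin (n + 1) → F)) :=
    Finite.of_injective (fun U : Submodule F (Fin (n + 1) → F) => (U : Set (Fin (n + 1) → F)))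
      SetLike.coe_injective
  infer_instance

lemma pg_count (F : Type) [Field F] [Fintype F] (n : ℕ)
    (W : Submodule F (Fin (n + 1) → F)) :
    {P : PGPoint F n | P.1 ≤ W}.ncard * (Fintype.card F - 1)
      = Fintype.card F ^ finrank F W - 1 := by
  classical
  set V := Fin (n + 1) → F with hV
  haveI : Finite (Submodule F V) :=
    Finite.of_injective (fun U : Submodule F V => (U : Set V)) SetLike.coe_injective
  haveI : Fintype (Submodule F V) := Fintype.ofFinite _
  set s : Finset V := (W : Set V).toFinset.erase 0 with hs
  set t : Finset (Submodule F V) :=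
    Finset.univ.filter (fun U => finrank F U = 1 ∧ U ≤ W) with ht
  have hmap : ∀ v ∈ s, Submodule.span F {v} ∈ t := by
    intro v hv
    simp only [hs, Finset.mem_erase, Set.mem_toFinset, SetLike.mem_coe] at hv
    simp only [ht, Finset.mem_filter, Finset.mem_univ, true_and]
    exact ⟨finrank_span_singleton hv.1, (Submodule.span_singleton_le_iff_mem _ _).2 hv.2⟩
  have hcard := Finset.card_eq_sum_card_fiberwise hmap
  have hfib : ∀ U ∈ t, (s.filter (fun v => Submodule.span F {v} = U)).card
      = Fintype.card F - 1 := by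
    intro U hU
    simp only [ht, Finset.mem_filter, Finset.mem_univ, true_and] at hU
    have he : s.filter (fun v => Submodule.span F {v} = U)
        = (U : Set V).toFinset.erase 0 := by
      ext v
      simp only [Finset.mem_filter, hs, Finset.mem_erase, Set.mem_toFinset, SetLike.mem_coe]
      constructor
      · rintro ⟨⟨hv0, _⟩, hsp⟩
        exact ⟨hv0, hsp ▸ Submodule.mem_span_singleton_self v⟩
      · rintro ⟨hv0, hvU⟩
        have hle : Submodule.span F {v} ≤ U := (Submodule.span_singleton_le_iff_mem _ _).2 hvU
        have heq : Submodule.span F {v} = U :=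
          Submodule.eq_of_le_of_finrank_le hle (by rw [finrank_span_singleton hv0, hU.1])
        exact ⟨⟨hv0, hU.2 hvU⟩, heq⟩
    rw [he, Finset.card_erase_of_mem (by simp)]
    have h1 : ((U : Set V).toFinset.card) = Fintype.card F ^ finrank F U := by
      rw [Set.toFinset_card]
      have : Fintype.card ((U : Set V) : Type) = Fintype.card U :=
        Fintype.card_congr (Equiv.setCongr rfl)
      rw [this, card_eq_pow_finrank (K := F)]
    rw [h1, hU.1, pow_one]
  rw [Finset.sum_congr rfl hfib, Finset.sum_const, smul_eq_mul] at hcard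
  have hscard : s.card = Fintype.card F ^ finrank F W - 1 := by
    rw [hs, Finset.card_erase_of_mem (by simp)]
    congr 1
    rw [Set.toFinset_card]
    have : Fintype.card ((W : Set V) : Type) = Fintype.card W :=
      Fintype.card_congr (Equiv.setCongr rfl)
    rw [this, card_eq_pow_finrank (K := F)]
  have htcard : t.card = {P : PGPoint F n | P.1 ≤ W}.ncard := by
    haveI := pg_finite F n
    have himg : (fun P : PGPoint F n => P.1) '' {P : PGPoint F n | P.1 ≤ W}
        = {U : Submodule F V | finrank F U = 1 ∧ U ≤ W} := by
      ext U
      constructor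
      · rintro ⟨P, hP, rfl⟩; exact ⟨P.2, hP⟩
      · rintro ⟨h1, h2⟩; exact ⟨⟨U, h1⟩, h2, rfl⟩
    have hco : {U : Submodule F V | finrank F U = 1 ∧ U ≤ W} = (t : Set (Submodule F V)) := by
      ext U; simp [ht]
    rw [← Set.ncard_image_of_injective {P : PGPoint F n | P.1 ≤ W}
        (fun a b hab => Subtype.ext hab), himg, hco, Set.ncard_coe_finset]
  rw [hscard, htcard] at hcard
  omega

lemma pg_count_eq (F : Type) [Field F] [Fintype F] (n : ℕ)
    (W : Submodule F (Fin (n + 1) → F)) (d : ℕ) (hd : finrank F W = d)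
    (h2 : 2 ≤ Fintype.card F) :
    ({P : PGPoint F n | P.1 ≤ W}.ncard : ℤ)
      = ∑ i ∈ Finset.range d, (Fintype.card F : ℤ) ^ i := by
  have h := pg_count F n W
  rw [hd] at h
  set q := Fintype.card F with hq
  set N := {P : PGPoint F n | P.1 ≤ W}.ncard with hN
  have h1 : 1 ≤ q := by omega
  have h2' : 1 ≤ q ^ d := Nat.one_le_pow _ _ (by omega)
  have hz : (N : ℤ) * ((q : ℤ) - 1) = (q : ℤ) ^ d - 1 := by
    have := congrArg (Nat.cast : ℕ → ℤ) h
    push_cast [Nat.cast_sub h1, Nat.cast_sub h2'] at this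
    linarith [this]
  have hg := geom_sum_mul ((q : ℤ)) d
  have hne : ((q : ℤ) - 1) ≠ 0 := by
    have : (2 : ℤ) ≤ (q : ℤ) := by exact_mod_cast h2
    omega
  exact mul_right_cancel₀ hne (by rw [hz, hg])

lemma pg_count_le (F : Type) [Field F] [Fintype F] (n : ℕ)
    (W : Submodule F (Fin (n + 1) → F)) (d : ℕ) (hd : finrank F W ≤ d)
    (h2 : 2 ≤ Fintype.card F) :
    ({P : PGPoint F n | P.1 ≤ W}.ncard : ℤ)
      ≤ ∑ i ∈ Finset.range d, (Fintype.card F : ℤ) ^ i := by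
  rw [pg_count_eq F n W (finrank F W) rfl h2]
  refine Finset.sum_le_sum_of_subset_of_nonneg (Finset.range_subset_range.mpr hd) ?_
  intro i _ _
  positivity

lemma pg_ncard_biUnion_le {α β : Type*} [Finite β] (T : Finset α) (f : α → Set β) :
    (⋃ a ∈ T, f a).ncard ≤ ∑ a ∈ T, (f a).ncard := by
  classical
  induction T using Finset.induction with
  | empty => simp
  | insert a T' h ih =>
    rw [Finset.sum_insert h, Finset.set_biUnion_insert]
    exact le_trans (Set.ncard_union_le _ _) (by omega)

lemma pg_delta_le (p h n : ℕ) (hp : p.Prime) (hh : 2 ≤ h) (hn : 2 ≤ n) :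
    2 * pgDelta p h (n : ℤ) ≤ ((p ^ h : ℕ) : ℤ) + 3 := by
  have hp2 : 2 ≤ p := hp.two_le
  unfold pgDelta
  by_cases hcase : 2 < h
  · rw [if_pos hcase]
    set x := Real.sqrt ((p : ℝ) ^ h) with hxdef
    have hx0 : 0 ≤ x := Real.sqrt_nonneg _
    have hpow1 : (1 : ℝ) ≤ (2 : ℝ) ^ ((n : ℤ) - 2) := by
      have he : (n : ℤ) - 2 = ((n - 2 : ℕ) : ℤ) := by omega
      rw [he, zpow_natCast]
      exact one_le_pow₀ (by norm_num)
    have hdiv : x / (2 : ℝ) ^ ((n : ℤ) - 2) ≤ x := div_le_self hx0 hpow1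
    have hfl : (⌊x / (2 : ℝ) ^ ((n : ℤ) - 2)⌋ : ℝ) ≤ x :=
      le_trans (Int.floor_le _) hdiv
    have hx2 : x ^ 2 = (p : ℝ) ^ h := Real.sq_sqrt (by positivity)
    have hgoal : (2 * (⌊x / (2 : ℝ) ^ ((n : ℤ) - 2)⌋ : ℤ) : ℝ) ≤ ((p ^ h : ℕ) : ℝ) + 3 := by
      push_cast
      nlinarith [sq_nonneg (x - 1), hfl, hx2]
    exact_mod_cast hgoal
  · rw [if_neg hcase]
    have hh2 : h = 2 := by omega
    have hpow1 : (1 : ℝ) ≤ (2 : ℝ) ^ (n : ℤ) := by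
      rw [zpow_natCast]; exact one_le_pow₀ (by norm_num)
    have hfl : (⌊(p : ℝ) / (2 : ℝ) ^ (n : ℤ)⌋ : ℝ) ≤ (p : ℝ) :=
      le_trans (Int.floor_le _) (div_le_self (by positivity) hpow1)
    have hgoal : (2 * (⌊(p : ℝ) / (2 : ℝ) ^ (n : ℤ)⌋ : ℤ) : ℝ) ≤ ((p ^ h : ℕ) : ℝ) + 3 := by
      subst hh2
      push_cast
      nlinarith [hfl, hp2]
    exact_mod_cast hgoal

end PGAux

set_option maxHeartbeats 1600000

/-- Proposition: if `supp(c') ⊆ supp(c)`, `wt(c) ≤ W(n,q)`, and `c`, `c'` are written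
as combinations of exactly `⌈wt/θ_{n−1}⌉` hyperplanes with nonzero coefficients over
the hyperplane sets `S`, `S'` respectively, then `S' ⊆ S`. -/
theorem statement_8 (p h n : ℕ) (hp : p.Prime) (hh : 2 ≤ h) (hn : 2 ≤ n)
    (hq27 : 27 < p ^ h)
    (hq1 : 2 < h → max 32 (2 ^ (2 * n - 4)) ≤ p ^ h)
    (hq2 : h = 2 → 2 ^ (2 * n) ≤ p ^ h)
    (F : Type) [Field F] [Fintype F] (hF : Fintype.card F = p ^ h)
    (c c' : PGPoint F n → ZMod p) (hc : c ∈ pgCode p F n) (hc' : c' ∈ pgCode p F n)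
    (hsupp : {P : PGPoint F n | c' P ≠ 0} ⊆ {P : PGPoint F n | c P ≠ 0})
    (hwt : (pgWt p F n c : ℤ) ≤ pgW p h n)
    (S S' : Finset (Submodule F (Fin (n + 1) → F)))
    (hScard : S.card = pgCeil (p ^ h) (pgWt p F n c) ((n : ℤ) - 1))
    (hS'card : S'.card = pgCeil (p ^ h) (pgWt p F n c') ((n : ℤ) - 1))
    (hShyp : ∀ H ∈ S, finrank F H = n) (hS'hyp : ∀ H ∈ S', finrank F H = n)
    (α β : Submodule F (Fin (n + 1) → F) → ZMod p)
    (hα : ∀ H ∈ S, α H ≠ 0) (hβ : ∀ H ∈ S', β H ≠ 0)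
    (hrepc : c = fun P => ∑ H ∈ S, α H * pgInd p F n H P)
    (hrepc' : c' = fun P => ∑ H ∈ S', β H * pgInd p F n H P) :
    S' ⊆ S := by
  classical
  haveI := pg_finite F n
  intro H' hH'S'
  by_contra hH'S
  set q := p ^ h with hqdef
  have hq2 : 2 ≤ q := by omega
  have hqF : 2 ≤ Fintype.card F := by rw [hF]; exact hq2
  -- theta values
  have e1 : ((n : ℤ) - 1 + 1).toNat = n := by omega
  have e2 : ((n : ℤ) - 2 + 1).toNat = n - 1 := by omega
  have hθ1 : pgTheta q ((n : ℤ) - 1) = ∑ i ∈ Finset.range n, (q : ℤ) ^ i := by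
    unfold pgTheta; rw [e1]
  have hθ2 : pgTheta q ((n : ℤ) - 2) = ∑ i ∈ Finset.range (n - 1), (q : ℤ) ^ i := by
    unfold pgTheta; rw [e2]
  set θ1 : ℤ := ∑ i ∈ Finset.range n, (q : ℤ) ^ i with hθ1def
  set θ2 : ℤ := ∑ i ∈ Finset.range (n - 1), (q : ℤ) ^ i with hθ2def
  have hθ1pos : 0 < θ1 := by
    refine Finset.sum_pos (fun i _ => by positivity) ⟨0, Finset.mem_range.mpr (by omega)⟩
  have hθ2pos : 0 < θ2 := by
    refine Finset.sum_pos (fun i _ => by positivity) ⟨0, Finset.mem_range.mpr (by omega)⟩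
  have hθrel : θ1 = (q : ℤ) * θ2 + 1 := by
    have key : ∑ i ∈ Finset.range ((n - 1) + 1), (q : ℤ) ^ i
        = (q : ℤ) * (∑ i ∈ Finset.range (n - 1), (q : ℤ) ^ i) + 1 := geom_sum_succ
    have hrw : (n - 1) + 1 = n := by omega
    rw [hrw] at key
    exact key
  -- Delta bounds
  set Δ : ℤ := pgDelta p h (n : ℤ) with hΔdef
  have hΔle : 2 * Δ ≤ (q : ℤ) + 3 := pg_delta_le p h n hp hh hn
  have hwtW : (pgWt p F n c : ℤ) ≤ (Δ - 1) * θ1 := by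
    have := hwt
    unfold pgW at this
    rw [hθ1] at this
    exact this
  have hΔ1 : 0 ≤ Δ - 1 := by nlinarith [hwtW, hθ1pos, Int.ofNat_nonneg (pgWt p F n c)]
  -- card bounds
  have cardbound : ∀ (w : ℕ), (w : ℤ) ≤ (Δ - 1) * θ1 →
      ((pgCeil q w ((n : ℤ) - 1) : ℕ) : ℤ) ≤ Δ - 1 := by
    intro w hw
    unfold pgCeil
    rw [hθ1]
    have hceil : ⌈(w : ℚ) / ((θ1 : ℤ) : ℚ)⌉ ≤ Δ - 1 := by
      rw [Int.ceil_le, div_le_iff₀ (by exact_mod_cast hθ1pos)]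
      have : (w : ℚ) ≤ ((Δ - 1 : ℤ) : ℚ) * ((θ1 : ℤ) : ℚ) := by exact_mod_cast hw
      convert this using 2 <;> push_cast <;> ring
    rw [Int.toNat_eq_max]
    exact max_le hceil hΔ1
  have hwt' : (pgWt p F n c' : ℤ) ≤ (pgWt p F n c : ℤ) := by
    exact_mod_cast Set.ncard_le_ncard hsupp (Set.toFinite _)
  have hScard' : (S.card : ℤ) ≤ Δ - 1 := by
    rw [hScard]; exact cardbound _ hwtW
  have hS'card' : (S'.card : ℤ) ≤ Δ - 1 := by
    rw [hS'card]; exact cardbound _ (le_trans hwt' hwtW)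
  -- the covering argument
  set T : Finset (Submodule F (Fin (n + 1) → F)) := S ∪ S'.erase H' with hT
  have hcover : {P : PGPoint F n | P.1 ≤ H'}
      ⊆ ⋃ K ∈ T, {P : PGPoint F n | P.1 ≤ K ⊓ H'} := by
    intro P hP
    simp only [Set.mem_setOf_eq] at hP
    by_cases hx : ∃ K ∈ S'.erase H', P.1 ≤ K
    · obtain ⟨K, hK, hPK⟩ := hx
      exact Set.mem_biUnion (Finset.mem_union_right _ hK) (le_inf hPK hP)
    · push_neg at hx
      have hc'P : c' P = β H' := by
        have hcp : c' P = ∑ H ∈ S', β H * pgInd p F n H P := by rw [hrepc']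
        rw [hcp, Finset.sum_eq_single H']
        · simp [pgInd, hP]
        · intro K hK hne
          have hnot : ¬ P.1 ≤ K := hx K (Finset.mem_erase.mpr ⟨hne, hK⟩)
          simp [pgInd, hnot]
        · intro hnm; exact absurd hH'S' hnm
      have hPc : c P ≠ 0 := by
        apply hsupp
        simp only [Set.mem_setOf_eq, hc'P]
        exact hβ H' hH'S'
      have hPc2 : ∑ H ∈ S, α H * pgInd p F n H P ≠ 0 := by
        have hcp : c P = ∑ H ∈ S, α H * pgInd p F n H P := by rw [hrepc]
        rw [hcp] at hPc
        exact hPc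
      obtain ⟨H, hHS, hne⟩ := Finset.exists_ne_zero_of_sum_ne_zero hPc2
      have hPH : P.1 ≤ H := by
        by_contra hcon
        simp [pgInd, hcon] at hne
      exact Set.mem_biUnion (Finset.mem_union_left _ hHS) (le_inf hPH hP)
  have hH'rank : finrank F H' = n := hS'hyp H' hH'S'
  have hPtsEq : ({P : PGPoint F n | P.1 ≤ H'}.ncard : ℤ) = θ1 := by
    rw [pg_count_eq F n H' n hH'rank hqF, hF]
  have hIntLe : ∀ K ∈ T, ({P : PGPoint F n | P.1 ≤ K ⊓ H'}.ncard : ℤ) ≤ θ2 := by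
    intro K hK
    have hKn : finrank F K = n := by
      rcases Finset.mem_union.mp hK with hk | hk
      exacts [hShyp K hk, hS'hyp K (Finset.mem_of_mem_erase hk)]
    have hKne : K ≠ H' := by
      rcases Finset.mem_union.mp hK with hk | hk
      · rintro rfl; exact hH'S hk
      · exact Finset.ne_of_mem_erase hk
    have hrk : finrank F (K ⊓ H' : Submodule F (Fin (n + 1) → F)) ≤ n - 1 := by
      by_contra hcon
      push_neg at hcon
      have hle1 : finrank F (K ⊓ H' : Submodule F (Fin (n + 1) → F)) ≤ n := by
        calc finrank F (K ⊓ H' : Submodule F (Fin (n + 1) → F))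
            ≤ finrank F K := Submodule.finrank_mono inf_le_left
          _ = n := hKn
      have heqn : finrank F (K ⊓ H' : Submodule F (Fin (n + 1) → F)) = n := by omega
      have h1 : K ⊓ H' = H' :=
        Submodule.eq_of_le_of_finrank_le inf_le_right (by rw [heqn, hH'rank])
      have h2 : H' ≤ K := h1 ▸ inf_le_left
      exact hKne (Submodule.eq_of_le_of_finrank_le h2 (by rw [hKn, hH'rank])).symm
    have := pg_count_le F n (K ⊓ H') (n - 1) hrk hqF
    rw [hF] at this
    exact this
  -- final count
  have hUnion := pg_ncard_biUnion_le T (fun K => {P : PGPoint F n | P.1 ≤ K ⊓ H'})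
  have hmono : ({P : PGPoint F n | P.1 ≤ H'}.ncard : ℤ)
      ≤ ∑ K ∈ T, ({P : PGPoint F n | P.1 ≤ K ⊓ H'}.ncard : ℤ) := by
    have h1 : {P : PGPoint F n | P.1 ≤ H'}.ncard
        ≤ (⋃ K ∈ T, {P : PGPoint F n | P.1 ≤ K ⊓ H'}).ncard :=
      Set.ncard_le_ncard hcover (Set.toFinite _)
    exact_mod_cast le_trans h1 hUnion
  have hsumle : ∑ K ∈ T, ({P : PGPoint F n | P.1 ≤ K ⊓ H'}.ncard : ℤ) ≤ (T.card : ℤ) * θ2 := by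
    calc ∑ K ∈ T, ({P : PGPoint F n | P.1 ≤ K ⊓ H'}.ncard : ℤ)
        ≤ ∑ _K ∈ T, θ2 := Finset.sum_le_sum hIntLe
      _ = (T.card : ℤ) * θ2 := by rw [Finset.sum_const, nsmul_eq_mul]
  have hTcard : (T.card : ℤ) ≤ (q : ℤ) := by
    have h1 : T.card ≤ S.card + (S'.erase H').card := Finset.card_union_le _ _
    have h2 : (S'.erase H').card = S'.card - 1 := Finset.card_erase_of_mem hH'S'
    have h3 : 1 ≤ S'.card := Finset.card_pos.mpr ⟨H', hH'S'⟩
    have h4 : (T.card : ℤ) ≤ (S.card : ℤ) + (S'.card : ℤ) - 1 := by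
      have := h1
      rw [h2] at this
      omega
    omega
  rw [hPtsEq] at hmono
  nlinarith [hmono, hsumle, hTcard, hθ2pos, hθrel]
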